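/- Let λ, μ, p ∈ ℝ with λ ≠ 1. Define Λ, ψ₀, h, h⁻ : ℝ² → ℝ² by Λ(x,y) = (λx, μy), ψ₀(x,y) = (λx + p, μy), h(x,y) = (x − p/(1−λ), y), and h⁻(x,y) = (x + p/(1−λ), y). Suppose F : ℝ² → ℝ² satisfies Λ ∘ F = F ∘ F ∘ Λ. Then G := h⁻ ∘ F ∘ h satisfies ψ₀ ∘ G = G ∘ G ∘ ψ₀. -/
import Mathlib


noncomputable section

/-- Lemma 4.2 of the paper: if `F` is a fixed point of the Eckmann–Koch–Wittwer
renormalization, i.e. `Λ ∘ F = F² ∘ Λ` with `Λ(x,y) = (λx, μy)`, then the map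
`G = h⁻¹ ∘ F ∘ h`, where `h(x,y) = (x − p/(1−λ), y)` is the translation in the
`x`-direction, satisfies `ψ₀ ∘ G = G² ∘ ψ₀` with `ψ₀(x,y) = (λx + p, μy)`;
that is, `G` is a fixed point of the Gaidashev–Johnson–Martens renormalization. -/
theorem ekw_fixed_point_conjugate_to_gjm_fixed_point
    (lam mu p : ℝ) (hlam : lam ≠ 1)
    (F : ℝ × ℝ → ℝ × ℝ)
    (hF : (fun q : ℝ × ℝ => (lam * q.1, mu * q.2)) ∘ F =
          F ∘ F ∘ (fun q : ℝ × ℝ => (lam * q.1, mu * q.2))) :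
    (fun q : ℝ × ℝ => (lam * q.1 + p, mu * q.2)) ∘
        ((fun q : ℝ × ℝ => (q.1 + p / (1 - lam), q.2)) ∘ F ∘
          (fun q : ℝ × ℝ => (q.1 - p / (1 - lam), q.2))) =
      ((fun q : ℝ × ℝ => (q.1 + p / (1 - lam), q.2)) ∘ F ∘
          (fun q : ℝ × ℝ => (q.1 - p / (1 - lam), q.2))) ∘
        ((fun q : ℝ × ℝ => (q.1 + p / (1 - lam), q.2)) ∘ F ∘
          (fun q : ℝ × ℝ => (q.1 - p / (1 - lam), q.2))) ∘
        (fun q : ℝ × ℝ => (lam * q.1 + p, mu * q.2)) := by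
  have h1 : (1 : ℝ) - lam ≠ 0 := sub_ne_zero.mpr (Ne.symm hlam)
  have hc : lam * (p / (1 - lam)) + p = p / (1 - lam) := by
    field_simp
    ring
  funext q
  have h := congrFun hF (q.1 - p / (1 - lam), q.2)
  simp only [Function.comp_apply] at h ⊢
  have key : lam * q.1 + p - p / (1 - lam) = lam * (q.1 - p / (1 - lam)) := by
    nlinarith [hc]
  rw [key]
  simp only [add_sub_cancel_right, Prod.mk.eta, ← h]
  simp only [Prod.mk.injEq]
  exact ⟨by nlinarith [hc], trivial⟩
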